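/- If H and H' are two vertex-disjoint global amoebas, then their disjoint union H ∪ H' is also a global amoeba. -/

import Mathlib

open SimpleGraph Equiv

/-- The labeled copy `G_σ`, with edges `v_{σ⁻¹ i} v_{σ⁻¹ j}` for edges `v_i v_j` of `G`. -/
def copyG {V : Type*} (G : SimpleGraph V) (σ : Equiv.Perm V) : SimpleGraph V where
  Adj a b := G.Adj (σ a) (σ b)
  symm := ⟨fun _ _ h => G.adj_symm h⟩
  loopless := ⟨fun _ h => G.irrefl h⟩

/-- The graph `G - v_r v_s + v_k v_l`. -/
def replaceG {V : Type*} (G : SimpleGraph V) (r s k l : V) : SimpleGraph V :=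
  SimpleGraph.fromEdgeSet ((G.edgeSet \ {s(r, s)}) ∪ {s(k, l)})

/-- The edge-replacement `rs → kl` is feasible: `v_r v_s ∈ E(G)`, `v_k v_l` is a non-edge or
`{k,l} = {r,s}`, and `G - v_r v_s + v_k v_l ≅ G`. -/
def IsFeasible {V : Type*} (G : SimpleGraph V) (r s k l : V) : Prop :=
  G.Adj r s ∧ (Gᶜ.Adj k l ∨ s(k, l) = s(r, s)) ∧ Nonempty (replaceG G r s k l ≃g G)

/-- The permutations realizing feasible edge-replacements of `G`. -/
def feasiblePerms {V : Type*} (G : SimpleGraph V) : Set (Equiv.Perm V) :=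
  {σ | ∃ r s k l, IsFeasible G r s k l ∧ copyG G σ = replaceG G r s k l}

/-- The group `S_G` generated by all permutations realizing feasible edge-replacements. -/
def ampGroup {V : Type*} (G : SimpleGraph V) : Subgroup (Equiv.Perm V) :=
  Subgroup.closure (feasiblePerms G)

/-- `G` is a local amoeba if `S_G` is the full symmetric group. -/
def LocalAmoeba {V : Type*} (G : SimpleGraph V) : Prop := ampGroup G = ⊤

/-- Disjoint union of two graphs. -/
def sumGraph {V W : Type*} (H : SimpleGraph V) (H' : SimpleGraph W) : SimpleGraph (V ⊕ W) :=
  SimpleGraph.map Sum.inl H ⊔ SimpleGraph.map Sum.inr H'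

/-- `G` together with `t` additional isolated vertices. -/
def addIsolated {V : Type*} (G : SimpleGraph V) (t : ℕ) : SimpleGraph (V ⊕ Fin t) :=
  sumGraph G (⊥ : SimpleGraph (Fin t))

/-- `G` is a global amoeba if `G ∪ tK₁` is a local amoeba for all sufficiently large `t`. -/
def GlobalAmoeba {V : Type*} (G : SimpleGraph V) : Prop :=
  ∃ T : ℕ, ∀ t ≥ T, LocalAmoeba (addIsolated G t)

section Basic

variable {α β : Type*}

@[simp] lemma copyG_adj (G : SimpleGraph α) (σ : Equiv.Perm α) (a b : α) :
    (copyG G σ).Adj a b ↔ G.Adj (σ a) (σ b) := Iff.rfl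

lemma copyG_one (G : SimpleGraph α) : copyG G 1 = G := by
  ext a b; rfl

lemma copyG_mul (G : SimpleGraph α) (σ τ : Equiv.Perm α) :
    copyG G (σ * τ) = copyG (copyG G σ) τ := by
  ext a b; rfl

lemma edgeSet_copyG (G : SimpleGraph α) (σ : Equiv.Perm α) :
    (copyG G σ).edgeSet = Sym2.map σ ⁻¹' G.edgeSet := by
  ext e
  induction e with
  | _ x y => simp [Sym2.map_pair_eq]

lemma replaceG_adj (G : SimpleGraph α) (r s k l x y : α) :
    (replaceG G r s k l).Adj x y ↔
      ((G.Adj x y ∧ s(x, y) ≠ s(r, s)) ∨ s(x, y) = s(k, l)) ∧ x ≠ y := by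
  simp only [replaceG, SimpleGraph.fromEdgeSet_adj, Set.mem_union, Set.mem_diff,
    Set.mem_singleton_iff, SimpleGraph.mem_edgeSet]

lemma replaceG_self (G : SimpleGraph α) {r s : α} (h : G.Adj r s) :
    replaceG G r s r s = G := by
  have : (G.edgeSet \ {s(r, s)}) ∪ {s(r, s)} = G.edgeSet := by
    rw [Set.diff_union_self, Set.union_eq_self_of_subset_right]
    simpa using h
  rw [replaceG, this, SimpleGraph.fromEdgeSet_edgeSet]

/-- Automorphism-like permutations are feasible, provided `G` has an edge. -/
lemma aut_mem_feasible {G : SimpleGraph α} {σ : Equiv.Perm α} {r s : α}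
    (h : G.Adj r s) (hσ : copyG G σ = G) : σ ∈ feasiblePerms G := by
  refine ⟨r, s, r, s, ⟨h, Or.inr rfl, ?_⟩, ?_⟩
  · rw [replaceG_self G h]; exact ⟨RelIso.refl _⟩
  · rw [replaceG_self G h, hσ]

@[simp] lemma sumGraph_adj_inl_inl (A : SimpleGraph α) (B : SimpleGraph β) (a b : α) :
    (sumGraph A B).Adj (Sum.inl a) (Sum.inl b) ↔ A.Adj a b := by
  simp [sumGraph, SimpleGraph.map_adj']
  exact fun h => h.ne

@[simp] lemma sumGraph_adj_inl_inr (A : SimpleGraph α) (B : SimpleGraph β) (a : α) (b : β) :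
    (sumGraph A B).Adj (Sum.inl a) (Sum.inr b) ↔ False := by
  simp [sumGraph, SimpleGraph.map_adj']

@[simp] lemma sumGraph_adj_inr_inl (A : SimpleGraph α) (B : SimpleGraph β) (a : β) (b : α) :
    (sumGraph A B).Adj (Sum.inr a) (Sum.inl b) ↔ False := by
  simp [sumGraph, SimpleGraph.map_adj']

@[simp] lemma sumGraph_adj_inr_inr (A : SimpleGraph α) (B : SimpleGraph β) (a b : β) :
    (sumGraph A B).Adj (Sum.inr a) (Sum.inr b) ↔ B.Adj a b := by
  simp [sumGraph, SimpleGraph.map_adj']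
  exact fun h => h.ne

end Basic
section Lift

variable {α β : Type*}

lemma mem_range_of_sym2_eq {φ : α ↪ β} {x y : β} {k l : α}
    (h : s(x, y) = s(φ k, φ l)) : x ∈ Set.range φ := by
  rw [Sym2.eq_iff] at h
  rcases h with ⟨rfl, rfl⟩ | ⟨rfl, rfl⟩ <;> exact Set.mem_range_self _

lemma sym2_map_emb_eq_iff (φ : α ↪ β) {a b k l : α} :
    s(φ a, φ b) = s(φ k, φ l) ↔ s(a, b) = s(k, l) := by
  constructor
  · intro h
    exact Sym2.map.injective φ.injective (by simpa [Sym2.map_pair_eq] using h)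
  · intro h
    have := congrArg (Sym2.map φ) h
    simpa [Sym2.map_pair_eq] using this

lemma sym2_map_emb_ne_iff (φ : α ↪ β) {a b k l : α} :
    s(φ a, φ b) ≠ s(φ k, φ l) ↔ s(a, b) ≠ s(k, l) := (sym2_map_emb_eq_iff φ).ne

lemma lift_feasible (φ : α ↪ β) {G : SimpleGraph α} {G' : SimpleGraph β}
    (h1 : ∀ a b, G'.Adj (φ a) (φ b) ↔ G.Adj a b)
    (h2 : ∀ (a : α) (y : β), G'.Adj (φ a) y → y ∈ Set.range φ)
    {σ : Equiv.Perm α} (hσ : σ ∈ feasiblePerms G) :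
    σ.viaEmbedding φ ∈ feasiblePerms G' := by
  obtain ⟨r, s, k, l, ⟨hrs, hkl, ⟨f⟩⟩, hcopy⟩ := hσ
  have hnoadj : ∀ (a : α) (y : β), y ∉ Set.range φ → ¬ G'.Adj (φ a) y := by
    intro a y hy hadj
    exact hy (h2 a y hadj)
  have hrep_in : ∀ a b : α,
      (replaceG G' (φ r) (φ s) (φ k) (φ l)).Adj (φ a) (φ b) ↔ (replaceG G r s k l).Adj a b := by
    intro a b
    simp only [replaceG_adj, h1, sym2_map_emb_eq_iff φ, sym2_map_emb_ne_iff φ, φ.injective.ne_iff]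
  have hrep_out : ∀ x y : β, x ∉ Set.range φ →
      ((replaceG G' (φ r) (φ s) (φ k) (φ l)).Adj x y ↔ G'.Adj x y) := by
    intro x y hx
    rw [replaceG_adj]
    constructor
    · rintro ⟨⟨hGxy, -⟩ | heq, -⟩
      · exact hGxy
      · exact absurd (mem_range_of_sym2_eq heq) hx
    · intro h
      refine ⟨Or.inl ⟨h, fun heq => hx (mem_range_of_sym2_eq heq)⟩, h.ne⟩
  have hrep_mixed : ∀ (a : α) (y : β), y ∉ Set.range φ →
      ¬ (replaceG G' (φ r) (φ s) (φ k) (φ l)).Adj (φ a) y := by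
    intro a y hy hadj
    rw [(replaceG G' (φ r) (φ s) (φ k) (φ l)).adj_comm, hrep_out y (φ a) hy] at hadj
    exact hnoadj a y hy hadj.symm
  refine ⟨φ r, φ s, φ k, φ l, ⟨(h1 r s).2 hrs, ?_, ?_⟩, ?_⟩
  · rcases hkl with hc | hc
    · rw [SimpleGraph.compl_adj] at hc
      exact Or.inl (SimpleGraph.compl_adj G' (φ k) (φ l) |>.2
        ⟨φ.injective.ne hc.1, fun h => hc.2 ((h1 k l).1 h)⟩)
    · right
      have := congrArg (Sym2.map φ) hc
      simpa [Sym2.map_pair_eq] using this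
  · -- the isomorphism
    refine ⟨⟨Equiv.Perm.viaEmbedding f.toEquiv φ, ?_⟩⟩
    intro x y
    rcases em (x ∈ Set.range φ) with ⟨a, rfl⟩ | hx
    · rcases em (y ∈ Set.range φ) with ⟨b, rfl⟩ | hy
      · rw [Equiv.Perm.viaEmbedding_apply, Equiv.Perm.viaEmbedding_apply]
        rw [h1, hrep_in]
        exact f.map_adj_iff
      · rw [Equiv.Perm.viaEmbedding_apply, Equiv.Perm.viaEmbedding_apply_of_notMem _ _ y hy]
        constructor
        · intro h; exact absurd h (hnoadj _ y hy)
        · intro h; exact absurd h (hrep_mixed a y hy)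
    · rcases em (y ∈ Set.range φ) with ⟨b, rfl⟩ | hy
      · rw [Equiv.Perm.viaEmbedding_apply, Equiv.Perm.viaEmbedding_apply_of_notMem _ _ x hx]
        rw [G'.adj_comm, (replaceG G' (φ r) (φ s) (φ k) (φ l)).adj_comm]
        constructor
        · intro h; exact absurd h (hnoadj _ x hx)
        · intro h; exact absurd h (hrep_mixed b x hx)
      · rw [Equiv.Perm.viaEmbedding_apply_of_notMem _ _ x hx,
          Equiv.Perm.viaEmbedding_apply_of_notMem _ _ y hy]
        exact (hrep_out x y hx).symm
  · -- copyG equality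
    ext x y
    rcases em (x ∈ Set.range φ) with ⟨a, rfl⟩ | hx
    · rcases em (y ∈ Set.range φ) with ⟨b, rfl⟩ | hy
      · rw [copyG_adj, Equiv.Perm.viaEmbedding_apply, Equiv.Perm.viaEmbedding_apply, h1,
          hrep_in]
        have : (copyG G σ).Adj a b ↔ (replaceG G r s k l).Adj a b := by rw [hcopy]
        simpa using this
      · rw [copyG_adj, Equiv.Perm.viaEmbedding_apply, Equiv.Perm.viaEmbedding_apply_of_notMem _ _ y hy]
        constructor
        · intro h; exact absurd h (hnoadj _ y hy)
        · intro h; exact absurd h (hrep_mixed a y hy)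
    · rcases em (y ∈ Set.range φ) with ⟨b, rfl⟩ | hy
      · rw [copyG_adj, Equiv.Perm.viaEmbedding_apply, Equiv.Perm.viaEmbedding_apply_of_notMem _ _ x hx]
        constructor
        · intro h; exact absurd h.symm (hnoadj _ x hx)
        · intro h; exact absurd h.symm (hrep_mixed b x hx)
      · rw [copyG_adj, Equiv.Perm.viaEmbedding_apply_of_notMem _ _ x hx,
          Equiv.Perm.viaEmbedding_apply_of_notMem _ _ y hy]
        exact (hrep_out x y hx).symm

end Lift
section AmpLift

variable {α β : Type*}

lemma lift_ampGroup (φ : α ↪ β) {G : SimpleGraph α} {G' : SimpleGraph β}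
    (h1 : ∀ a b, G'.Adj (φ a) (φ b) ↔ G.Adj a b)
    (h2 : ∀ (a : α) (y : β), G'.Adj (φ a) y → y ∈ Set.range φ)
    (hG : LocalAmoeba G) (σ : Equiv.Perm α) :
    σ.viaEmbedding φ ∈ ampGroup G' := by
  have hmap : (ampGroup G).map (Equiv.Perm.viaEmbeddingHom φ) ≤ ampGroup G' := by
    rw [ampGroup, MonoidHom.map_closure]
    apply Subgroup.closure_mono
    rintro τ' ⟨τ, hτ, rfl⟩
    exact lift_feasible φ h1 h2 hτ
  have hσ : σ ∈ ampGroup G := by rw [hG]; trivial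
  exact hmap ⟨σ, hσ, rfl⟩

lemma viaEmbedding_swap [DecidableEq α] [DecidableEq β] (φ : α ↪ β) (a b : α) :
    (Equiv.swap a b).viaEmbedding φ = Equiv.swap (φ a) (φ b) := by
  ext x
  rcases em (x ∈ Set.range φ) with ⟨c, rfl⟩ | hx
  · rw [Equiv.Perm.viaEmbedding_apply]
    rcases eq_or_ne c a with rfl | hca
    · simp
    rcases eq_or_ne c b with rfl | hcb
    · simp
    · rw [Equiv.swap_apply_of_ne_of_ne hca hcb,
        Equiv.swap_apply_of_ne_of_ne (φ.injective.ne hca) (φ.injective.ne hcb)]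
  · rw [Equiv.Perm.viaEmbedding_apply_of_notMem _ _ x hx,
      Equiv.swap_apply_of_ne_of_ne (fun h : x = φ a => hx (h ▸ Set.mem_range_self a))
        (fun h : x = φ b => hx (h ▸ Set.mem_range_self b))]

end AmpLift
section FiniteDiff

variable {α : Type*}

/-- The set of edges on which `G_σ` differs from `G`. -/
def diffSet (G : SimpleGraph α) (σ : Equiv.Perm α) : Set (Sym2 α) :=
  ((copyG G σ).edgeSet \ G.edgeSet) ∪ (G.edgeSet \ (copyG G σ).edgeSet)

lemma sym2_map_perm_symm_comp (σ : Equiv.Perm α) (e : Sym2 α) :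
    Sym2.map ⇑σ (Sym2.map ⇑σ⁻¹ e) = e := by
  induction e with
  | _ x y => simp [Sym2.map_pair_eq]

lemma sym2_map_perm_surj (σ : Equiv.Perm α) : Function.Surjective (Sym2.map ⇑σ) :=
  fun e => ⟨Sym2.map ⇑σ⁻¹ e, sym2_map_perm_symm_comp σ e⟩

/-- The permutations whose copy differs from `G` in finitely many edges form a subgroup. -/
noncomputable def finDiffSubgroup (G : SimpleGraph α) : Subgroup (Equiv.Perm α) where
  carrier := {σ | (diffSet G σ).Finite}
  one_mem' := by
    have : diffSet G 1 = ∅ := by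
      simp [diffSet, copyG_one]
    simp [Set.mem_setOf_eq, this]
  mul_mem' := by
    intro σ τ hσ hτ
    simp only [Set.mem_setOf_eq] at *
    have hsub : diffSet G (σ * τ) ⊆ (Sym2.map ⇑τ ⁻¹' diffSet G σ) ∪ diffSet G τ := by
      intro e he
      simp only [diffSet, Set.mem_union, Set.mem_diff, Set.mem_preimage,
        edgeSet_copyG, copyG_mul, Set.mem_preimage] at *
      tauto
    refine Set.Finite.subset (Set.Finite.union ?_ hτ) hsub
    exact Set.Finite.preimage (Set.injOn_of_injective (Sym2.map.injective τ.injective)) hσ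
  inv_mem' := by
    intro σ hσ
    simp only [Set.mem_setOf_eq] at *
    have key : Sym2.map ⇑σ ⁻¹' diffSet G σ⁻¹ = diffSet G σ := by
      have h1 : Sym2.map ⇑σ ⁻¹' (copyG G σ⁻¹).edgeSet = G.edgeSet := by
        rw [edgeSet_copyG, ← Set.preimage_comp]
        have hcomp : Sym2.map ⇑σ⁻¹ ∘ Sym2.map ⇑σ = id := by
          funext e
          induction e with
          | _ x y => simp [Sym2.map_pair_eq]
        rw [hcomp, Set.preimage_id]
      have h2 : Sym2.map ⇑σ ⁻¹' G.edgeSet = (copyG G σ).edgeSet := (edgeSet_copyG G σ).symm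
      simp only [diffSet, Set.preimage_union, Set.preimage_diff, h1, h2]
      rw [Set.union_comm]
    have : diffSet G σ⁻¹ = Sym2.map ⇑σ '' (Sym2.map ⇑σ ⁻¹' diffSet G σ⁻¹) :=
      (Set.image_preimage_eq _ (sym2_map_perm_surj σ)).symm
    rw [this, key]
    exact hσ.image _

lemma feasible_mem_finDiff (G : SimpleGraph α) {σ : Equiv.Perm α}
    (hσ : σ ∈ feasiblePerms G) : σ ∈ finDiffSubgroup G := by
  obtain ⟨r, s, k, l, -, hcopy⟩ := hσ
  show (diffSet G σ).Finite
  have hsub : diffSet G σ ⊆ {s(r, s), s(k, l)} := by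
    intro e he
    simp only [Set.mem_insert_iff, Set.mem_singleton_iff]
    have hE : (copyG G σ).edgeSet = ((G.edgeSet \ {s(r, s)}) ∪ {s(k, l)}) \ {e | e.IsDiag} := by
      rw [hcopy, replaceG, SimpleGraph.edgeSet_fromEdgeSet]
      rfl
    rcases he with ⟨h1, h2⟩ | ⟨h1, h2⟩
    · rw [hE] at h1
      rcases h1.1 with ⟨he, -⟩ | he
      · exact absurd he h2
      · exact Or.inr he
    · rw [hE] at h2
      have hd : ¬ e.IsDiag := G.not_isDiag_of_mem_edgeSet h1
      have hnot : e ∉ (G.edgeSet \ {s(r, s)}) ∪ {s(k, l)} := fun hmem => h2 ⟨hmem, hd⟩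
      left
      by_contra hrs
      exact hnot (Or.inl ⟨h1, hrs⟩)
  exact Set.Finite.subset (by simp) hsub

lemma localAmoeba_finDiff {G : SimpleGraph α} (hG : LocalAmoeba G) (σ : Equiv.Perm α) :
    (diffSet G σ).Finite := by
  have h : ampGroup G ≤ finDiffSubgroup G :=
    (Subgroup.closure_le _).2 (fun τ hτ => feasible_mem_finDiff G hτ)
  have : σ ∈ ampGroup G := by rw [hG]; trivial
  exact h this

end FiniteDiff
section InfiniteCase

variable {Ω : Type*}

lemma degree_finite (G : SimpleGraph Ω)
    (hdiff : ∀ σ : Equiv.Perm Ω, (diffSet G σ).Finite)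
    (w₀ : Ω) (hw₀ : ∀ x, ¬ G.Adj w₀ x) (v : Ω) :
    {u | G.Adj v u}.Finite := by
  classical
  set σ := Equiv.swap v w₀ with hσdef
  have himg : (fun u => s(v, u)) '' {u | G.Adj v u} ⊆ diffSet G σ := by
    rintro e ⟨u, hu, rfl⟩
    right
    refine ⟨hu, ?_⟩
    rw [SimpleGraph.mem_edgeSet, copyG_adj, hσdef, Equiv.swap_apply_left]
    exact hw₀ _
  refine Set.Finite.of_finite_image ((hdiff σ).subset himg) ?_
  intro u hu u' hu' he
  rcases Sym2.eq_iff.1 he with ⟨-, h⟩ | ⟨h1, h2⟩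
  · exact h
  · exact absurd (h2 ▸ hu) (G.irrefl (v := v))

lemma adjPairs_infinite (G : SimpleGraph Ω) (hE : G.edgeSet.Infinite) :
    {p : Ω × Ω | G.Adj p.1 p.2}.Infinite := by
  have hsub : G.edgeSet ⊆ (fun p : Ω × Ω => s(p.1, p.2)) '' {p | G.Adj p.1 p.2} := by
    intro e he
    induction e with
    | _ x y => exact ⟨(x, y), he, rfl⟩
  intro hfin
  exact hE ((hfin.image _).subset hsub)

lemma exists_avoiding (G : SimpleGraph Ω) (hE : G.edgeSet.Infinite)
    (hdeg : ∀ v, {u | G.Adj v u}.Finite)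
    (F : Set Ω) (hF : F.Finite) :
    ∃ p : Ω × Ω, G.Adj p.1 p.2 ∧ p.1 ∉ F ∧ p.2 ∉ F := by
  have hbad : {p : Ω × Ω | G.Adj p.1 p.2 ∧ (p.1 ∈ F ∨ p.2 ∈ F)}.Finite := by
    have hsub : {p : Ω × Ω | G.Adj p.1 p.2 ∧ (p.1 ∈ F ∨ p.2 ∈ F)} ⊆
        (⋃ x ∈ F, (fun u => (x, u)) '' {u | G.Adj x u}) ∪
        (⋃ x ∈ F, (fun u => (u, x)) '' {u | G.Adj x u}) := by
      rintro ⟨p1, p2⟩ ⟨hadj, h1 | h2⟩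
      · exact Or.inl (Set.mem_biUnion h1 ⟨p2, hadj, rfl⟩)
      · exact Or.inr (Set.mem_biUnion h2 ⟨p1, hadj.symm, rfl⟩)
    exact ((hF.biUnion (fun x _ => (hdeg x).image _)).union
      (hF.biUnion (fun x _ => (hdeg x).image _))).subset hsub
  obtain ⟨p, hp⟩ := ((adjPairs_infinite G hE).diff hbad).nonempty
  exact ⟨p, hp.1, fun h => hp.2 ⟨hp.1, Or.inl h⟩, fun h => hp.2 ⟨hp.1, Or.inr h⟩⟩

lemma edgeSet_finite_of_diff (G : SimpleGraph Ω)
    (hdiff : ∀ σ : Equiv.Perm Ω, (diffSet G σ).Finite)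
    (w₀ : Ω) (hw₀ : ∀ x, ¬ G.Adj w₀ x) :
    G.edgeSet.Finite := by
  classical
  by_contra hE'
  have hE : G.edgeSet.Infinite := hE'
  have hdeg := degree_finite G hdiff w₀ hw₀
  set Fl : List (Ω × Ω) → Set Ω := fun L =>
    ⋃ q ∈ {q | q ∈ L}, (({q.1, q.2} ∪ {x | G.Adj q.1 x}) ∪ {x | G.Adj q.2 x}) with hFldef
  have hFlfin : ∀ L, (Fl L).Finite := by
    intro L
    refine (L.finite_toSet).biUnion ?_
    intro q _
    exact (((Set.finite_singleton q.2).insert q.1).union (hdeg q.1)).union (hdeg q.2)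
  have hnext : ∀ L : List (Ω × Ω), ∃ p : Ω × Ω, G.Adj p.1 p.2 ∧ p.1 ∉ Fl L ∧ p.2 ∉ Fl L :=
    fun L => exists_avoiding G hE hdeg (Fl L) (hFlfin L)
  choose next hnext1 hnext2 hnext3 using hnext
  let seqL : ℕ → List (Ω × Ω) := fun n => Nat.rec [] (fun _ L => next L :: L) n
  let p : ℕ → Ω × Ω := fun n => next (seqL n)
  let a : ℕ → Ω := fun n => (p n).1
  let b : ℕ → Ω := fun n => (p n).2
  have hadj : ∀ n, G.Adj (a n) (b n) := fun n => hnext1 _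
  have hmem : ∀ m n, m < n → p m ∈ seqL n := by
    intro m n h
    induction n with
    | zero => omega
    | succ n ih =>
      show p m ∈ p n :: seqL n
      rcases Nat.lt_succ_iff_lt_or_eq.1 h with h' | rfl
      · exact List.mem_cons_of_mem _ (ih h')
      · exact List.mem_cons_self
  have hFmem : ∀ m n, m < n → ∀ x,
      (x = a m ∨ x = b m ∨ G.Adj (a m) x ∨ G.Adj (b m) x) → x ∈ Fl (seqL n) := by
    intro m n h x hx
    refine Set.mem_biUnion (hmem m n h) ?_
    simp only [Set.mem_union, Set.mem_insert_iff, Set.mem_singleton_iff, Set.mem_setOf_eq]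
    tauto
  -- distinctness and non-adjacency for m < n
  have haa' : ∀ m n, m < n → a n ≠ a m :=
    fun m n h heq => hnext2 (seqL n) (hFmem m n h _ (Or.inl heq))
  have hab' : ∀ m n, m < n → a n ≠ b m :=
    fun m n h heq => hnext2 (seqL n) (hFmem m n h _ (Or.inr (Or.inl heq)))
  have hba' : ∀ m n, m < n → b n ≠ a m :=
    fun m n h heq => hnext3 (seqL n) (hFmem m n h _ (Or.inl heq))
  have hbb' : ∀ m n, m < n → b n ≠ b m :=
    fun m n h heq => hnext3 (seqL n) (hFmem m n h _ (Or.inr (Or.inl heq)))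
  have hnadjab : ∀ m n, m < n → ¬ G.Adj (a m) (b n) :=
    fun m n h hadj' => hnext3 (seqL n) (hFmem m n h _ (Or.inr (Or.inr (Or.inl hadj'))))
  have hnadjab2 : ∀ m n, m < n → ¬ G.Adj (a n) (b m) :=
    fun m n h hadj' => hnext2 (seqL n) (hFmem m n h _ (Or.inr (Or.inr (Or.inr hadj'.symm))))
  have hnadj : ∀ m n, m ≠ n → ¬ G.Adj (a m) (b n) := by
    intro m n hmn
    rcases lt_or_gt_of_ne hmn with h | h
    · exact hnadjab m n h
    · exact hnadjab2 n m h
  have hab : ∀ m n, a m ≠ b n := by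
    intro m n
    rcases lt_trichotomy m n with h | rfl | h
    · exact fun heq => hba' m n h heq.symm
    · exact (hadj m).ne
    · exact hab' n m h
  have binj : Function.Injective b := by
    intro m n heq
    by_contra hmn
    rcases lt_or_gt_of_ne hmn with h | h
    · exact hbb' m n h heq.symm
    · exact hbb' n m h heq
  set bemb : ℕ ↪ Ω := ⟨b, binj⟩ with hbemb
  -- the index involution 2i ↔ 2i+1
  set si : ℕ → ℕ := fun n => if Even n then n + 1 else n - 1 with hsidef
  have hsi : Function.Involutive si := by
    intro n
    rcases Nat.even_or_odd n with h | h
    · have h1 : si n = n + 1 := if_pos h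
      have h2 : ¬ Even (n + 1) := by simp [Nat.even_add_one, h]
      rw [h1, hsidef]
      simp [h2]
    · obtain ⟨k, rfl⟩ := h
      have h1 : si (2 * k + 1) = 2 * k := by
        rw [hsidef]
        have : ¬ Even (2 * k + 1) := by simp [Nat.even_add_one]
        simp [this]
      have h2 : si (2 * k) = 2 * k + 1 := by
        rw [hsidef]
        simp [Nat.even_mul]
      rw [h1, h2]
  set σ : Equiv.Perm Ω := (Function.Involutive.toPerm si hsi).viaEmbedding bemb with hσdef
  have hσb : ∀ n, σ (b n) = b (si n) := by
    intro n
    have := Equiv.Perm.viaEmbedding_apply (Function.Involutive.toPerm si hsi) bemb n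
    exact this
  have hanotin : ∀ n, a n ∉ Set.range bemb := by
    rintro n ⟨m, hm⟩
    exact hab n m hm.symm
  have hσa : ∀ n, σ (a n) = a n := fun n =>
    Equiv.Perm.viaEmbedding_apply_of_notMem _ _ (a n) (hanotin n)
  have hsi2 : ∀ i : ℕ, si (2 * i) = 2 * i + 1 := by
    intro i
    rw [hsidef]
    simp [Nat.even_mul]
  have hsub : Set.range (fun i : ℕ => s(a (2 * i), b (2 * i))) ⊆ diffSet G σ := by
    rintro e ⟨i, rfl⟩
    right
    refine ⟨hadj (2 * i), ?_⟩
    rw [SimpleGraph.mem_edgeSet, copyG_adj, hσa, hσb, hsi2]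
    exact hnadj (2 * i) (2 * i + 1) (by omega)
  have hinj : Function.Injective (fun i : ℕ => s(a (2 * i), b (2 * i))) := by
    intro i j heq
    rcases Sym2.eq_iff.1 heq with ⟨h1, -⟩ | ⟨h1, -⟩
    · by_contra hij
      have : (2 * i : ℕ) ≠ 2 * j := by omega
      rcases lt_or_gt_of_ne this with h | h
      · exact haa' (2 * i) (2 * j) h h1.symm
      · exact haa' (2 * j) (2 * i) h h1
    · exact absurd h1 (hab _ _)
  exact (Set.infinite_range_of_injective hinj) ((hdiff σ).subset hsub)

lemma globalAmoeba_edgeSet_finite {V : Type*} {H : SimpleGraph V} (hH : GlobalAmoeba H) :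
    H.edgeSet.Finite := by
  obtain ⟨T, hT⟩ := hH
  have hL := hT (T + 1) (by omega)
  have hdiff := fun σ => localAmoeba_finDiff hL σ
  have hGfin : (addIsolated H (T + 1)).edgeSet.Finite := by
    refine edgeSet_finite_of_diff _ hdiff (Sum.inr ⟨0, by omega⟩) ?_
    intro x
    rcases x with x | x <;> simp [addIsolated]
  have himg : Sym2.map (Sum.inl : V → V ⊕ Fin (T + 1)) '' H.edgeSet ⊆
      (addIsolated H (T + 1)).edgeSet := by
    rintro e ⟨e', he', rfl⟩
    induction e' with
    | _ x y =>
      rw [Sym2.map_pair_eq, SimpleGraph.mem_edgeSet]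
      simp only [addIsolated, sumGraph_adj_inl_inl]
      exact he'
  exact Set.Finite.of_finite_image (hGfin.subset himg)
    (Set.injOn_of_injective (Sym2.map.injective Sum.inl_injective))
end InfiniteCase
section Supp

variable {α β : Type*}

/-- The set of non-isolated vertices. -/
def suppSet (G : SimpleGraph α) : Set α := {x | ∃ y, G.Adj x y}

lemma suppSet_finite {G : SimpleGraph α} (h : G.edgeSet.Finite) : (suppSet G).Finite := by
  have hsub : suppSet G ⊆ ⋃ e ∈ G.edgeSet, {x | x ∈ e} := by
    rintro x ⟨y, hxy⟩
    exact Set.mem_biUnion ((SimpleGraph.mem_edgeSet G).2 hxy) (Sym2.mem_mk_left x y)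
  refine (h.biUnion ?_).subset hsub
  intro e _
  induction e with
  | _ x y =>
    have hset : {z | z ∈ s(x, y)} = {x, y} := by
      ext z
      simp [Sym2.mem_iff]
    rw [hset]
    exact (Set.finite_singleton y).insert x

lemma edgeSet_sumGraph_subset (A : SimpleGraph α) (B : SimpleGraph β) :
    (sumGraph A B).edgeSet ⊆
      (Sym2.map Sum.inl '' A.edgeSet) ∪ (Sym2.map Sum.inr '' B.edgeSet) := by
  intro e he
  induction e with
  | _ x y =>
    rw [SimpleGraph.mem_edgeSet] at he
    rcases x with a | b <;> rcases y with a' | b'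
    · exact Or.inl ⟨s(a, a'), (sumGraph_adj_inl_inl A B a a').1 he, Sym2.map_pair_eq _ _ _⟩
    · exact absurd he (by simp)
    · exact absurd he (by simp)
    · exact Or.inr ⟨s(b, b'), (sumGraph_adj_inr_inr A B b b').1 he, Sym2.map_pair_eq _ _ _⟩

lemma fixing_support_mem_ampGroup {G : SimpleGraph α} {r s : α} (hrs : G.Adj r s)
    {ν : Equiv.Perm α} (hν : ∀ x y : α, G.Adj x y → ν x = x) : ν ∈ ampGroup G := by
  have hcopy : copyG G ν = G := by
    ext x y
    rw [copyG_adj]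
    constructor
    · intro h
      have hx : ν x = x := ν.injective (hν _ _ h)
      have hy : ν y = y := ν.injective (hν _ _ h.symm)
      rwa [hx, hy] at h
    · intro h
      rw [hν x y h, hν y x h.symm]
      exact h
  exact Subgroup.subset_closure (aut_mem_feasible hrs hcopy)

lemma globalAmoeba_edgeSet_nonempty {H : SimpleGraph α} (hH : GlobalAmoeba H) :
    H.edgeSet.Nonempty := by
  classical
  by_contra hne
  rw [Set.not_nonempty_iff_eq_empty] at hne
  obtain ⟨T, hT⟩ := hH
  have hL := hT (T + 2) (by omega)
  have hfe : feasiblePerms (addIsolated H (T + 2)) = ∅ := by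
    ext σ
    simp only [Set.mem_empty_iff_false, iff_false]
    rintro ⟨r, s, k, l, ⟨hrs, -, -⟩, -⟩
    rcases r with v | i <;> rcases s with v' | i'
    · have hmm : s(v, v') ∈ H.edgeSet := by
        rw [SimpleGraph.mem_edgeSet]
        simpa [addIsolated] using hrs
      rw [hne] at hmm
      exact hmm
    · simp [addIsolated] at hrs
    · simp [addIsolated] at hrs
    · simp [addIsolated] at hrs
  have hbot : ampGroup (addIsolated H (T + 2)) = ⊥ := by
    rw [ampGroup, hfe, Subgroup.closure_empty]
  rw [LocalAmoeba, hbot] at hL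
  set x : α ⊕ Fin (T + 2) := Sum.inr ⟨0, by omega⟩ with hxd
  set y : α ⊕ Fin (T + 2) := Sum.inr ⟨1, by omega⟩ with hyd
  have h01 : x ≠ y := by
    rw [hxd, hyd]
    intro h
    simp at h
  have hmem : Equiv.swap x y ∈ (⊥ : Subgroup (Equiv.Perm (α ⊕ Fin (T + 2)))) := by
    rw [hL]
    trivial
  rw [Subgroup.mem_bot] at hmem
  have happ := Equiv.swap_apply_left x y
  rw [hmem] at happ
  simp at happ
  exact h01 happ

end Supp

theorem stmt15 {V W : Type*} (H : SimpleGraph V) (H' : SimpleGraph W)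
    (hH : GlobalAmoeba H) (hH' : GlobalAmoeba H') :
    GlobalAmoeba (sumGraph H H') := by
  classical
  obtain ⟨T1, hT1⟩ := hH
  obtain ⟨T2, hT2⟩ := hH'
  have hHfin : H.edgeSet.Finite := globalAmoeba_edgeSet_finite ⟨T1, hT1⟩
  have hH'fin : H'.edgeSet.Finite := globalAmoeba_edgeSet_finite ⟨T2, hT2⟩
  have hHne : H.edgeSet.Nonempty := globalAmoeba_edgeSet_nonempty ⟨T1, hT1⟩
  refine ⟨max T1 T2 + 1, ?_⟩
  intro t ht
  have ht1 : t ≥ T1 := by omega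
  have ht2 : t ≥ T2 := by omega
  have htpos : 0 < t := by omega
  set Gbig := addIsolated (sumGraph H H') t with hGbigdef
  rw [LocalAmoeba, eq_top_iff]
  intro π _
  set K := ampGroup Gbig with hKdef
  -- the two embeddings
  set φV : (V ⊕ Fin t) ↪ ((V ⊕ W) ⊕ Fin t) :=
    ⟨Sum.elim (fun v => Sum.inl (Sum.inl v)) Sum.inr, (Sum.inl_injective.comp Sum.inl_injective).sumElim Sum.inr_injective
      (fun _ _ => Sum.inl_ne_inr)⟩ with hφVdef
  set φW : (W ⊕ Fin t) ↪ ((V ⊕ W) ⊕ Fin t) :=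
    ⟨Sum.elim (fun w => Sum.inl (Sum.inr w)) Sum.inr, (Sum.inl_injective.comp Sum.inr_injective).sumElim Sum.inr_injective
      (fun _ _ => Sum.inl_ne_inr)⟩ with hφWdef
  have h1V : ∀ a b, Gbig.Adj (φV a) (φV b) ↔ (addIsolated H t).Adj a b := by
    intro a b
    rcases a with v | i <;> rcases b with v' | i' <;>
      simp [hGbigdef, hφVdef, addIsolated, Function.Embedding.coeFn_mk]
  have h2V : ∀ (a : V ⊕ Fin t) (y : (V ⊕ W) ⊕ Fin t),
      Gbig.Adj (φV a) y → y ∈ Set.range φV := by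
    intro a y hadj
    rcases a with v | i
    · rcases y with (v' | w') | i'
      · exact ⟨Sum.inl v', rfl⟩
      · simp [hGbigdef, hφVdef, addIsolated, Function.Embedding.coeFn_mk] at hadj
      · simp [hGbigdef, hφVdef, addIsolated, Function.Embedding.coeFn_mk] at hadj
    · rcases y with (v' | w') | i' <;> simp [hGbigdef, hφVdef, addIsolated, Function.Embedding.coeFn_mk] at hadj
  have h1W : ∀ a b, Gbig.Adj (φW a) (φW b) ↔ (addIsolated H' t).Adj a b := by
    intro a b
    rcases a with w | i <;> rcases b with w' | i' <;>
      simp [hGbigdef, hφWdef, addIsolated, Function.Embedding.coeFn_mk]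
  have h2W : ∀ (a : W ⊕ Fin t) (y : (V ⊕ W) ⊕ Fin t),
      Gbig.Adj (φW a) y → y ∈ Set.range φW := by
    intro a y hadj
    rcases a with w | i
    · rcases y with (v' | w') | i'
      · simp [hGbigdef, hφWdef, addIsolated, Function.Embedding.coeFn_mk] at hadj
      · exact ⟨Sum.inl w', rfl⟩
      · simp [hGbigdef, hφWdef, addIsolated, Function.Embedding.coeFn_mk] at hadj
    · rcases y with (v' | w') | i' <;> simp [hGbigdef, hφWdef, addIsolated, Function.Embedding.coeFn_mk] at hadj
  have hAmem : ∀ τ : Equiv.Perm (V ⊕ Fin t), τ.viaEmbedding φV ∈ K :=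
    lift_ampGroup φV h1V h2V (hT1 t ht1)
  have hBmem : ∀ τ : Equiv.Perm (W ⊕ Fin t), τ.viaEmbedding φW ∈ K :=
    lift_ampGroup φW h1W h2W (hT2 t ht2)
  have hswapV : ∀ a b : V ⊕ Fin t, Equiv.swap (φV a) (φV b) ∈ K := by
    intro a b
    rw [← viaEmbedding_swap]
    exact hAmem _
  have hswapW : ∀ a b : W ⊕ Fin t, Equiv.swap (φW a) (φW b) ∈ K := by
    intro a b
    rw [← viaEmbedding_swap]
    exact hBmem _
  -- c is an isolated vertex usable by both sides
  set i0 : Fin t := ⟨0, htpos⟩ with hi0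
  have hcV : (Sum.inr i0 : (V ⊕ W) ⊕ Fin t) = φV (Sum.inr i0) := rfl
  have hcW : (Sum.inr i0 : (V ⊕ W) ⊕ Fin t) = φW (Sum.inr i0) := rfl
  -- mixed swap
  have hswapVW : ∀ (v : V) (w : W),
      Equiv.swap (Sum.inl (Sum.inl v) : (V ⊕ W) ⊕ Fin t) (Sum.inl (Sum.inr w)) ∈ K := by
    intro v w
    set x : (V ⊕ W) ⊕ Fin t := Sum.inl (Sum.inl v)
    set z : (V ⊕ W) ⊕ Fin t := Sum.inl (Sum.inr w)
    set c : (V ⊕ W) ⊕ Fin t := Sum.inr i0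
    have hxy : x ≠ c := by simp [x, c]
    have hxz : x ≠ z := by simp [x, z]
    have hkey : Equiv.swap c z * Equiv.swap x c * Equiv.swap c z = Equiv.swap z x :=
      Equiv.swap_mul_swap_mul_swap hxy hxz
    have h1 : Equiv.swap c z ∈ K := by
      have : c = φW (Sum.inr i0) := rfl
      have hz : z = φW (Sum.inl w) := rfl
      rw [this, hz]
      exact hswapW _ _
    have h2 : Equiv.swap x c ∈ K := by
      have hx : x = φV (Sum.inl v) := rfl
      have : c = φV (Sum.inr i0) := rfl
      rw [hx, this]
      exact hswapV _ _
    have hmem : Equiv.swap z x ∈ K := by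
      rw [← hkey]
      exact K.mul_mem (K.mul_mem h1 h2) h1
    rw [Equiv.swap_comm]
    exact hmem
  -- all transpositions are in K
  have hswap : ∀ x y : (V ⊕ W) ⊕ Fin t, Equiv.swap x y ∈ K := by
    intro x y
    rcases x with (v | w) | i
    · rcases y with (v' | w') | i'
      · exact hswapV (Sum.inl v) (Sum.inl v')
      · exact hswapVW v w'
      · exact hswapV (Sum.inl v) (Sum.inr i')
    · rcases y with (v' | w') | i'
      · rw [Equiv.swap_comm]
        exact hswapVW v' w
      · exact hswapW (Sum.inl w) (Sum.inl w')
      · exact hswapW (Sum.inl w) (Sum.inr i')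
    · rcases y with (v' | w') | i'
      · exact hswapV (Sum.inr i) (Sum.inl v')
      · exact hswapW (Sum.inr i) (Sum.inl w')
      · exact hswapV (Sum.inr i) (Sum.inr i')
  -- an edge of Gbig
  obtain ⟨e0, he0⟩ := hHne
  obtain ⟨u0, v0, hu0v0⟩ : ∃ u v : V, H.Adj u v := by
    induction e0 with
    | _ x y => exact ⟨x, y, (SimpleGraph.mem_edgeSet H).1 he0⟩
  have hrs : Gbig.Adj (Sum.inl (Sum.inl u0)) (Sum.inl (Sum.inl v0)) := by
    simp [hGbigdef, addIsolated]
    exact hu0v0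
  -- Gbig has finite support
  have hGbigE : Gbig.edgeSet.Finite := by
    refine Set.Finite.subset ?_ (edgeSet_sumGraph_subset (sumGraph H H') ⊥)
    refine Set.Finite.union ?_ ?_
    · refine Set.Finite.image _ ?_
      refine Set.Finite.subset ?_ (edgeSet_sumGraph_subset H H')
      exact (hHfin.image _).union (hH'fin.image _)
    · rw [SimpleGraph.edgeSet_bot]
      simp
  have hsuppfin : (suppSet Gbig).Finite := suppSet_finite hGbigE
  -- correction permutation
  have hcorr : ∀ S : Finset ((V ⊕ W) ⊕ Fin t), ∃ μ ∈ K, ∀ x ∈ S, μ (π x) = x := by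
    intro S
    induction S using Finset.induction_on with
    | empty => exact ⟨1, K.one_mem, by simp⟩
    | @insert a S' ha ih =>
      obtain ⟨μ, hμK, hμ⟩ := ih
      refine ⟨Equiv.swap a (μ (π a)) * μ, K.mul_mem (hswap _ _) hμK, ?_⟩
      intro x hx'
      rcases Finset.mem_insert.1 hx' with rfl | hxs
      · show (Equiv.swap x (μ (π x))) (μ (π x)) = x
        exact Equiv.swap_apply_right _ _
      · have h1 : μ (π x) = x := hμ x hxs
        have h2 : x ≠ a := fun h => ha (h ▸ hxs)
        have h3 : x ≠ μ (π a) := by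
          intro h
          apply h2
          have : μ (π x) = μ (π a) := by rw [h1, h]
          exact π.injective (μ.injective this)
        show (Equiv.swap a (μ (π a))) (μ (π x)) = x
        rw [h1, Equiv.swap_apply_of_ne_of_ne h2 h3]
  obtain ⟨μ, hμK, hμ⟩ := hcorr hsuppfin.toFinset
  have hν : μ * π ∈ K := by
    refine fixing_support_mem_ampGroup hrs ?_
    intro x y hxy
    exact hμ x (hsuppfin.mem_toFinset.2 ⟨y, hxy⟩)
  have hfactor : π = μ⁻¹ * (μ * π) := by group
  rw [hfactor]
  exact K.mul_mem (K.inv_mem hμK) hν
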